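/- Let N ≥ 4 and let 2 ≤ j ≤ N−2. Then ∑_{k=1}^{N−1} ( cos(2πk/N) + 1/(2 − 2cos(2πk/N)) ) · ( 1 − exp(−2πijk/N) ) = b(j,N), where b(j,N) := (1/2)·∑_{k=1}^{N−1} (1 − cos(2πjk/N))/(1 − cos(2πk/N)); moreover b(j,N) > 0. -/

import Mathlib

open Real Finset

lemma not_dvd_aux (N : ℕ) (m : ℤ) (h1 : 0 < m) (h2 : m < N) : ¬ (N:ℤ) ∣ m :=
  fun h => absurd (Int.le_of_dvd h1 h) (by omega)

lemma cos_lt_one_aux (x : ℝ) (h0 : 0 < x) (h2 : x < 2 * π) : Real.cos x < 1 := by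
  refine lt_of_le_of_ne (Real.cos_le_one x) (fun h => ?_)
  have := (Real.cos_eq_one_iff_of_lt_of_lt (by linarith) h2).1 h
  linarith

lemma sum_exp_aux (N : ℕ) (hN : 1 ≤ N) (m : ℤ) (hm : ¬ (N:ℤ) ∣ m) :
    ∑ k ∈ Finset.Icc 1 (N - 1), Complex.exp (2 * π * Complex.I * m * k / N) = -1 := by
  have hNC : (N:ℂ) ≠ 0 := Nat.cast_ne_zero.mpr (by omega)
  set z : ℂ := Complex.exp (2 * π * Complex.I * m / N) with hz
  have hzk : ∀ k : ℕ, Complex.exp (2 * π * Complex.I * m * k / N) = z ^ k := by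
    intro k
    rw [hz, ← Complex.exp_nat_mul]
    congr 1
    field_simp
  have hz1 : z ≠ 1 := by
    rw [hz]
    intro h
    rw [Complex.exp_eq_one_iff] at h
    obtain ⟨n, hn⟩ := h
    apply hm
    refine ⟨n, ?_⟩
    have h2 : (2 * π * Complex.I) ≠ 0 := by
      simp [Real.pi_ne_zero, Complex.I_ne_zero, Complex.ofReal_ne_zero]
    have : (m : ℂ) = N * n := by
      field_simp at hn
      apply mul_left_cancel₀ h2
      linear_combination (2 * π * Complex.I) * hn
    exact_mod_cast this
  have hzN : z ^ N = 1 := by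
    rw [hz, ← Complex.exp_nat_mul]
    rw [show (N:ℂ) * (2 * π * Complex.I * m / N) = m * (2 * π * Complex.I) by
      field_simp]
    exact Complex.exp_int_mul_two_pi_mul_I m
  have hIcc : Finset.Icc 1 (N - 1) = Finset.Ico 1 N := by
    rw [← Finset.Ico_add_one_right_eq_Icc]
    congr 1
    omega
  have hgeom : ∑ k ∈ Finset.range N, z ^ k = 0 := by
    rw [geom_sum_eq hz1, hzN, sub_self, zero_div]
  have hsplit : ∑ k ∈ Finset.range N, z ^ k = z ^ 0 + ∑ k ∈ Finset.Ico 1 N, z ^ k := by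
    rw [Finset.range_eq_Ico, Finset.sum_eq_sum_Ico_succ_bot (by omega)]
  rw [hIcc]
  calc ∑ k ∈ Finset.Ico 1 N, Complex.exp (2 * π * Complex.I * m * k / N)
      = ∑ k ∈ Finset.Ico 1 N, z ^ k := Finset.sum_congr rfl fun k _ => hzk k
    _ = -1 := by
        have h := hsplit
        rw [hgeom, pow_zero] at h
        linear_combination -h

lemma not_dvd_aux' (N : ℕ) (m : ℤ) (h1 : m ≠ 0) (h2 : -(N:ℤ) < m) (h3 : m < N) :
    ¬ (N:ℤ) ∣ m := by
  intro h
  rcases h1.lt_or_gt with hlt | hlt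
  · exact absurd (Int.le_of_dvd (by omega) (dvd_neg.mpr h)) (by omega)
  · exact absurd (Int.le_of_dvd hlt h) (by omega)

theorem ngon_middle_eigenvalue_sum (N j : ℕ) (hN : 4 ≤ N) (hj1 : 2 ≤ j) (hj2 : j ≤ N - 2)
    (b : ℝ)
    (hb : b = (1 / 2) * ∑ k ∈ Finset.Icc 1 (N - 1),
      (1 - Real.cos (2 * π * j * k / N)) / (1 - Real.cos (2 * π * k / N))) :
    (∑ k ∈ Finset.Icc 1 (N - 1),
      (((Real.cos (2 * π * k / N) : ℝ) : ℂ) +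
          1 / (2 - 2 * ((Real.cos (2 * π * k / N) : ℝ) : ℂ))) *
        (1 - Complex.exp (-(2 * (π : ℂ) * Complex.I * j * k / N))) = (b : ℂ)) ∧
    0 < b := by
  have hN1 : 1 ≤ N := by omega
  have hNR : (N:ℝ) ≠ 0 := Nat.cast_ne_zero.mpr (by omega)
  have hNC : (N:ℂ) ≠ 0 := Nat.cast_ne_zero.mpr (by omega)
  have hπ := Real.pi_pos
  have hcoslt : ∀ k ∈ Finset.Icc 1 (N-1), Real.cos (2*π*(k:ℝ)/N) < 1 := by
    intro k hk
    rw [Finset.mem_Icc] at hk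
    have hk1 : (1:ℝ) ≤ k := by exact_mod_cast hk.1
    have hkN : (k:ℝ) < N := by exact_mod_cast (by omega : k < N)
    apply cos_lt_one_aux
    · positivity
    · rw [div_lt_iff₀ (by positivity)]
      nlinarith
  have hjlt : Real.cos (2*π*(j:ℝ)/N) < 1 := by
    have hj0 : (0:ℝ) < j := by exact_mod_cast (by omega : 0 < j)
    have hjN : (j:ℝ) < N := by exact_mod_cast (by omega : j < N)
    apply cos_lt_one_aux
    · positivity
    · rw [div_lt_iff₀ (by positivity)]
      nlinarith
  have hbpos : 0 < b := by
    rw [hb]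
    have hpos : 0 < ∑ k ∈ Finset.Icc 1 (N-1),
        (1 - Real.cos (2 * π * j * k / N)) / (1 - Real.cos (2 * π * k / N)) := by
      apply Finset.sum_pos'
      · intro k hk
        have h1 := hcoslt k hk
        have h2 : Real.cos (2 * π * j * k / N) ≤ 1 := Real.cos_le_one _
        apply div_nonneg <;> linarith
      · refine ⟨1, Finset.mem_Icc.mpr ⟨le_refl 1, by omega⟩, ?_⟩
        have h1 := hcoslt 1 (Finset.mem_Icc.mpr ⟨le_refl 1, by omega⟩)
        have h2 : Real.cos (2 * π * (j:ℝ) * (1:ℕ) / N) < 1 := by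
          simpa using hjlt
        apply div_pos
        · simpa using (by linarith [h2] : (0:ℝ) < 1 - Real.cos (2 * π * (j:ℝ) * ((1:ℕ):ℝ) / N))
        · simpa using (by linarith [h1] : (0:ℝ) < 1 - Real.cos (2 * π * ((1:ℕ):ℝ) / N))
    linarith
  refine ⟨?_, hbpos⟩
  -- non-divisibility facts
  have hd1 : ¬(N:ℤ) ∣ 1 := not_dvd_aux' N 1 (by omega) (by omega) (by omega)
  have hd2 : ¬(N:ℤ) ∣ (-1) := not_dvd_aux' N (-1) (by omega) (by omega) (by omega)
  have hd3 : ¬(N:ℤ) ∣ (1 - (j:ℤ)) := not_dvd_aux' N _ (by omega) (by omega) (by omega)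
  have hd4 : ¬(N:ℤ) ∣ (-(1 + (j:ℤ))) := not_dvd_aux' N _ (by omega) (by omega) (by omega)
  -- A part
  have hterm : ∀ k : ℕ,
      ((Real.cos (2 * π * k / N) : ℝ) : ℂ) *
          (1 - Complex.exp (-(2 * (π : ℂ) * Complex.I * j * k / N))) =
        (1/2) * (Complex.exp (2 * π * Complex.I * ((1:ℤ):ℂ) * k / N)
          + Complex.exp (2 * π * Complex.I * ((-1:ℤ):ℂ) * k / N)
          - Complex.exp (2 * π * Complex.I * ((1 - (j:ℤ)):ℂ) * k / N)
          - Complex.exp (2 * π * Complex.I * ((-(1 + (j:ℤ))):ℂ) * k / N)) := by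
    intro k
    set u : ℂ := 2 * (π:ℂ) * Complex.I * k / N with hu
    have hcos : ((Real.cos (2 * π * (k:ℝ) / N) : ℝ) : ℂ)
        = (Complex.exp u + Complex.exp (-u)) / 2 := by
      rw [Complex.ofReal_cos]
      have h2c := Complex.two_cos (((2 * π * (k:ℝ) / N : ℝ)):ℂ)
      have ha : (((2 * π * (k:ℝ) / N : ℝ)):ℂ) * Complex.I = u := by
        rw [hu]; push_cast; ring
      have hb' : -(((2 * π * (k:ℝ) / N : ℝ)):ℂ) * Complex.I = -u := by
        rw [hu]; push_cast; ring
      rw [ha, hb'] at h2c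
      linear_combination h2c / 2
    have hE : Complex.exp (-(2 * (π : ℂ) * Complex.I * j * k / N))
        = Complex.exp (-((j:ℂ) * u)) := by
      congr 1; rw [hu]; ring
    have g1 : Complex.exp (2 * π * Complex.I * ((1:ℤ):ℂ) * k / N) = Complex.exp u := by
      congr 1; rw [hu]; push_cast; ring
    have g2 : Complex.exp (2 * π * Complex.I * ((-1:ℤ):ℂ) * k / N) = Complex.exp (-u) := by
      congr 1; rw [hu]; push_cast; ring
    have g3 : Complex.exp (2 * π * Complex.I * ((1 - (j:ℤ)):ℂ) * k / N)
        = Complex.exp u * Complex.exp (-((j:ℂ) * u)) := by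
      rw [← Complex.exp_add]; congr 1; rw [hu]; push_cast; ring
    have g4 : Complex.exp (2 * π * Complex.I * ((-(1 + (j:ℤ))):ℂ) * k / N)
        = Complex.exp (-u) * Complex.exp (-((j:ℂ) * u)) := by
      rw [← Complex.exp_add]; congr 1; rw [hu]; push_cast; ring
    rw [hcos, hE, g1, g2, g3, g4]
    ring
  have hA : ∑ k ∈ Finset.Icc 1 (N-1),
      ((Real.cos (2 * π * k / N) : ℝ) : ℂ) *
        (1 - Complex.exp (-(2 * (π : ℂ) * Complex.I * j * k / N))) = 0 := by
    rw [Finset.sum_congr rfl (fun k _ => hterm k)]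
    rw [← Finset.mul_sum]
    simp only [Finset.sum_add_distrib, Finset.sum_sub_distrib]
    have e3 : (∑ x ∈ Finset.Icc 1 (N-1),
        Complex.exp (2 * (π:ℂ) * Complex.I * (1 - ((j:ℤ):ℂ)) * x / N)) = -1 := by
      rw [← sum_exp_aux N hN1 (1 - (j:ℤ)) hd3]
      exact Finset.sum_congr rfl fun k _ => by congr 2; push_cast; ring
    have e4 : (∑ x ∈ Finset.Icc 1 (N-1),
        Complex.exp (2 * (π:ℂ) * Complex.I * (-(1 + ((j:ℤ):ℂ))) * x / N)) = -1 := by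
      rw [← sum_exp_aux N hN1 (-(1 + (j:ℤ))) hd4]
      exact Finset.sum_congr rfl fun k _ => by congr 2; push_cast; ring
    rw [sum_exp_aux N hN1 1 hd1, sum_exp_aux N hN1 (-1) hd2, e3, e4]
    norm_num
  -- B part: reflection k ↦ N - k
  have hrefl : (∑ k ∈ Finset.Icc 1 (N-1),
      (1 / (2 - 2 * ((Real.cos (2 * π * k / N) : ℝ) : ℂ))) *
        (1 - Complex.exp (-(2 * (π : ℂ) * Complex.I * j * k / N))))
      = ∑ k ∈ Finset.Icc 1 (N-1),
      (1 / (2 - 2 * ((Real.cos (2 * π * ((N - k : ℕ):ℝ) / N) : ℝ) : ℂ))) *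
        (1 - Complex.exp (-(2 * (π : ℂ) * Complex.I * j * ((N - k : ℕ):ℂ) / N))) := by
    refine Finset.sum_nbij' (fun k => N - k) (fun k => N - k) ?_ ?_ ?_ ?_ ?_
    · intro a ha; simp only [Finset.mem_Icc] at *; omega
    · intro a ha; simp only [Finset.mem_Icc] at *; omega
    · intro a ha; simp only [Finset.mem_Icc] at ha; show N - (N - a) = a; omega
    · intro a ha; simp only [Finset.mem_Icc] at ha; show N - (N - a) = a; omega
    · intro a ha
      simp only [Finset.mem_Icc] at ha
      have h' : N - (N - a) = a := by omega
      show _ = _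
      rw [h']
  have hpair : ∀ k ∈ Finset.Icc 1 (N-1),
      ((1 / (2 - 2 * ((Real.cos (2 * π * k / N) : ℝ) : ℂ))) *
        (1 - Complex.exp (-(2 * (π : ℂ) * Complex.I * j * k / N)))
      + (1 / (2 - 2 * ((Real.cos (2 * π * ((N - k : ℕ):ℝ) / N) : ℝ) : ℂ))) *
        (1 - Complex.exp (-(2 * (π : ℂ) * Complex.I * j * ((N - k : ℕ):ℂ) / N))))
      = (((1 - Real.cos (2 * π * j * k / N)) / (1 - Real.cos (2 * π * k / N)) : ℝ) : ℂ) := by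
    intro k hk
    have h1c := hcoslt k hk
    rw [Finset.mem_Icc] at hk
    have hkN : k ≤ N := by omega
    have hcos2 : Real.cos (2 * π * ((N - k:ℕ):ℝ) / N) = Real.cos (2 * π * (k:ℝ) / N) := by
      rw [Nat.cast_sub hkN,
        show 2*π*((N:ℝ) - k)/N = 2*π - 2*π*(k:ℝ)/N from by field_simp,
        Real.cos_two_pi_sub]
    have hexp2 : Complex.exp (-(2 * (π:ℂ) * Complex.I * j * ((N - k:ℕ):ℂ) / N))
        = Complex.exp (2 * (π:ℂ) * Complex.I * j * k / N) := by
      have he1 : Complex.exp (-(j:ℂ) * (2*(π:ℂ)*Complex.I)) = 1 := by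
        have := Complex.exp_int_mul_two_pi_mul_I (-(j:ℤ))
        push_cast at this
        exact this
      rw [Nat.cast_sub hkN,
        show -(2*(π:ℂ)*Complex.I*j*((N:ℂ) - k)/N)
          = -(j:ℂ) * (2*(π:ℂ)*Complex.I) + 2*(π:ℂ)*Complex.I*j*k/N from by
            field_simp; ring,
        Complex.exp_add, he1, one_mul]
    have hsum2 : Complex.exp (2*(π:ℂ)*Complex.I*(j:ℂ)*k/N)
        + Complex.exp (-(2*(π:ℂ)*Complex.I*(j:ℂ)*k/N))
        = 2 * ((Real.cos (2*π*(j:ℝ)*k/N) : ℝ):ℂ) := by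
      rw [Complex.ofReal_cos]
      have h2c := Complex.two_cos (((2*π*(j:ℝ)*(k:ℝ)/N : ℝ)):ℂ)
      rw [show (((2*π*(j:ℝ)*(k:ℝ)/N : ℝ)):ℂ) * Complex.I = 2*(π:ℂ)*Complex.I*(j:ℂ)*k/N from by
            push_cast; ring,
          show -(((2*π*(j:ℝ)*(k:ℝ)/N : ℝ)):ℂ) * Complex.I = -(2*(π:ℂ)*Complex.I*(j:ℂ)*k/N) from by
            push_cast; ring] at h2c
      linear_combination -h2c
    have hne1 : ((1:ℂ) - ((Real.cos (2*π*(k:ℝ)/N) : ℝ):ℂ)) ≠ 0 := by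
      rw [show ((1:ℂ) - ((Real.cos (2*π*(k:ℝ)/N) : ℝ):ℂ))
          = (((1 - Real.cos (2*π*(k:ℝ)/N)):ℝ):ℂ) from by push_cast; ring,
        Complex.ofReal_ne_zero]
      linarith
    have h2ne : ((2:ℂ) - 2 * ((Real.cos (2*π*(k:ℝ)/N) : ℝ):ℂ)) ≠ 0 := by
      intro h; apply hne1; linear_combination h/2
    rw [hcos2, hexp2,
      show (((1 - Real.cos (2*π*(j:ℝ)*(k:ℝ)/N)) / (1 - Real.cos (2*π*(k:ℝ)/N)) : ℝ):ℂ)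
        = ((1:ℂ) - ((Real.cos (2*π*(j:ℝ)*(k:ℝ)/N):ℝ):ℂ))
            / ((1:ℂ) - ((Real.cos (2*π*(k:ℝ)/N):ℝ):ℂ)) from by push_cast; ring,
      eq_div_iff hne1]
    have hinv : ((2:ℂ) - 2 * ((Real.cos (2*π*(k:ℝ)/N):ℝ):ℂ))
        * (1 / ((2:ℂ) - 2 * ((Real.cos (2*π*(k:ℝ)/N):ℝ):ℂ))) = 1 := by
      rw [mul_one_div, div_self h2ne]
    linear_combination
      (-(1 / ((2:ℂ) - 2 * ((Real.cos (2*π*(k:ℝ)/N):ℝ):ℂ)))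
          * (1 - ((Real.cos (2*π*(k:ℝ)/N):ℝ):ℂ))) * hsum2
      + (1 - ((Real.cos (2*π*(j:ℝ)*(k:ℝ)/N):ℝ):ℂ)) * hinv
  have hB : (∑ k ∈ Finset.Icc 1 (N-1),
      (1 / (2 - 2 * ((Real.cos (2 * π * k / N) : ℝ) : ℂ))) *
        (1 - Complex.exp (-(2 * (π : ℂ) * Complex.I * j * k / N)))) = (b:ℂ) := by
    have h2 : (2:ℂ) * (∑ k ∈ Finset.Icc 1 (N-1),
        (1 / (2 - 2 * ((Real.cos (2 * π * k / N) : ℝ) : ℂ))) *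
          (1 - Complex.exp (-(2 * (π : ℂ) * Complex.I * j * k / N))))
        = ∑ k ∈ Finset.Icc 1 (N-1),
          ((1 / (2 - 2 * ((Real.cos (2 * π * k / N) : ℝ) : ℂ))) *
            (1 - Complex.exp (-(2 * (π : ℂ) * Complex.I * j * k / N)))
          + (1 / (2 - 2 * ((Real.cos (2 * π * ((N - k : ℕ):ℝ) / N) : ℝ) : ℂ))) *
            (1 - Complex.exp (-(2 * (π : ℂ) * Complex.I * j * ((N - k : ℕ):ℂ) / N)))) := by
      rw [Finset.sum_add_distrib, ← hrefl]; ring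
    rw [Finset.sum_congr rfl hpair] at h2
    rw [hb]
    push_cast at h2 ⊢
    linear_combination h2 / 2
  calc (∑ k ∈ Finset.Icc 1 (N - 1),
      (((Real.cos (2 * π * k / N) : ℝ) : ℂ) +
          1 / (2 - 2 * ((Real.cos (2 * π * k / N) : ℝ) : ℂ))) *
        (1 - Complex.exp (-(2 * (π : ℂ) * Complex.I * j * k / N))))
      = (∑ k ∈ Finset.Icc 1 (N-1),
          ((Real.cos (2 * π * k / N) : ℝ) : ℂ) *
            (1 - Complex.exp (-(2 * (π : ℂ) * Complex.I * j * k / N))))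
        + ∑ k ∈ Finset.Icc 1 (N-1),
          (1 / (2 - 2 * ((Real.cos (2 * π * k / N) : ℝ) : ℂ))) *
            (1 - Complex.exp (-(2 * (π : ℂ) * Complex.I * j * k / N))) := by
        rw [← Finset.sum_add_distrib]
        exact Finset.sum_congr rfl fun k _ => by ring
    _ = (b:ℂ) := by rw [hA, hB, zero_add]
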